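/- Let u be a unit vector inducing an S-basis with cos φ = g(u,Su), φ ∈ (π/4, 3π/4), φ ≠ π/2. Then the vectors e₁ = u, e₂ = (−cos φ·u + Su − cos φ·S²u)/√(1−2cos²φ), e₃ = S²u are pairwise g-orthonormal. -/

import Mathlib

theorem orthonormal_basis_alpha1 {V : Type*} [AddCommGroup V] [Module ℝ V]
    (g : V →ₗ[ℝ] V →ₗ[ℝ] ℝ) (S : V →ₗ[ℝ] V)
    (hsym : ∀ u v : V, g u v = g v u)
    (hpos : ∀ v : V, v ≠ 0 → 0 < g v v)
    (hS4 : ∀ v : V, S (S (S (S v))) = -v)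
    (hcomp : ∀ u v : V, g (S u) (S v) = g u v)
    (u : V) (hu : g u u = 1)
    (hind : LinearIndependent ℝ ![u, S u, S (S u), S (S (S u))])
    (c : ℝ) (hc : c = g u (S u)) (hc2 : 0 < 1 - 2 * c ^ 2)
    (e₁ e₂ e₃ : V)
    (he₁ : e₁ = u)
    (he₂ : e₂ = (Real.sqrt (1 - 2 * c ^ 2))⁻¹ • ((-c) • u + S u + (-c) • S (S u)))
    (he₃ : e₃ = S (S u)) :
    g e₁ e₁ = 1 ∧ g e₂ e₂ = 1 ∧ g e₃ e₃ = 1 ∧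
    g e₁ e₂ = 0 ∧ g e₁ e₃ = 0 ∧ g e₂ e₃ = 0 := by
  have h1 : g (S u) (S u) = 1 := by rw [hcomp]; exact hu
  have h2 : g (S (S u)) (S (S u)) = 1 := by rw [hcomp, hcomp]; exact hu
  have h3 : g u (S (S u)) = 0 := by
    have e1 : g (S u) (S (S (S u))) = g u (S (S u)) := hcomp u (S (S u))
    have e2 : g (S (S u)) (S (S (S (S u)))) = g (S u) (S (S (S u))) :=
      hcomp (S u) (S (S (S u)))
    rw [hS4, map_neg, e1, hsym] at e2
    linarith
  have h4 : g (S u) (S (S u)) = c := by rw [hcomp]; exact hc.symm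
  have hs : Real.sqrt (1 - 2 * c ^ 2) * Real.sqrt (1 - 2 * c ^ 2) = 1 - 2 * c ^ 2 :=
    Real.mul_self_sqrt hc2.le
  have hs0 : Real.sqrt (1 - 2 * c ^ 2) ≠ 0 := by positivity
  have hsym1 := hsym u (S u)
  have hsym2 := hsym (S u) (S (S u))
  have hsym3 := hsym u (S (S u))
  subst he₁ he₂ he₃
  refine ⟨hu, ?_, h2, ?_, h3, ?_⟩
  · simp only [map_add, map_smul, map_neg, LinearMap.add_apply, LinearMap.smul_apply,
      LinearMap.neg_apply, smul_eq_mul, hu, h1, h2, h3, h4, ← hsym1, ← hsym2, ← hsym3, ← hc]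
    field_simp
    ring_nf
    rw [Real.sq_sqrt (by linarith)]
  · simp only [map_add, map_smul, map_neg, LinearMap.add_apply, LinearMap.smul_apply,
      LinearMap.neg_apply, smul_eq_mul, hu, h1, h2, h3, h4, ← hsym1, ← hsym2, ← hsym3, ← hc]
    ring
  · simp only [map_add, map_smul, map_neg, LinearMap.add_apply, LinearMap.smul_apply,
      LinearMap.neg_apply, smul_eq_mul, hu, h1, h2, h3, h4, ← hsym1, ← hsym2, ← hsym3, ← hc]
    ring
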